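/- Let D be an Eulerian digraph on n vertices with m edges obtained by iteratively removing a longest cycle; if every Eulerian digraph with r edges on n vertices contains a cycle of length more than r/(24 n^{4/3}), then after at most 50 n^{4/3} log n iterations no edges remain. Consequently, every Eulerian oriented graph on n vertices can be decomposed into at most 50 n^{4/3} log n cycles. -/

import Mathlib

open Finset

variable {V : Type*}

/-- Out-degree of a vertex in a digraph. -/
noncomputable def outDeg (D : V → V → Prop) (v : V) : ℕ := Nat.card {u // D v u}

/-- In-degree of a vertex in a digraph. -/
noncomputable def inDeg (D : V → V → Prop) (v : V) : ℕ := Nat.card {u // D u v}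

/-- The (signed) excess of a vertex: `d⁺(v) − d⁻(v)`. -/
noncomputable def exInt (D : V → V → Prop) (v : V) : ℤ :=
  (outDeg D v : ℤ) - (inDeg D v : ℤ)

/-- Positive excess `ex⁺(v) = max{d⁺(v)−d⁻(v),0}`. -/
noncomputable def exPlus (D : V → V → Prop) (v : V) : ℕ := (exInt D v).toNat

/-- Negative excess `ex⁻(v) = max{d⁻(v)−d⁺(v),0}`. -/
noncomputable def exMinus (D : V → V → Prop) (v : V) : ℕ := (-(exInt D v)).toNat

/-- The excess of a digraph: `ex(D) = ∑_v ex⁺(v) = (1/2)∑_v |ex(v)|`. -/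
noncomputable def exD [Fintype V] (D : V → V → Prop) : ℕ := ∑ v, exPlus D v

/-- The list of (directed) edges traversed by a path, given as its list of vertices. -/
def pathEdges (p : List V) : List (V × V) := p.zip p.tail

/-- A directed path of `D` with at least one edge, given by its list of (distinct) vertices. -/
def IsPath (D : V → V → Prop) (p : List V) : Prop :=
  p.Nodup ∧ 2 ≤ p.length ∧ ∀ e ∈ pathEdges p, D e.1 e.2

/-- A path decomposition of `D`: a list of paths whose edge sets partition `E(D)`. -/
def IsPathDecomp (D : V → V → Prop) (Ps : List (List V)) : Prop :=
  (∀ p ∈ Ps, IsPath D p) ∧ ((Ps.map pathEdges).flatten.Nodup) ∧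
    ∀ u v : V, D u v ↔ (u, v) ∈ (Ps.map pathEdges).flatten

/-- The edge list of a closed cycle given by its vertex list. -/
def cycEdges (c : List V) : List (V × V) := c.zip (c.rotate 1)

/-- A directed cycle of `D`, given by its list of (distinct) vertices. -/
def IsCycle (D : V → V → Prop) (c : List V) : Prop :=
  2 ≤ c.length ∧ c.Nodup ∧ ∀ e ∈ cycEdges c, D e.1 e.2

/-- A decomposition of the edge set of `D` into cycles. -/
def IsCycleDecomp (D : V → V → Prop) (Cs : List (List V)) : Prop :=
  (∀ c ∈ Cs, IsCycle D c) ∧ ((Cs.map cycEdges).flatten.Nodup) ∧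
    ∀ u v : V, D u v ↔ (u, v) ∈ (Cs.map cycEdges).flatten

/-- The number of edges of a digraph. -/
noncomputable def numEdges (D : V → V → Prop) : ℕ := Nat.card {e : V × V // D e.1 e.2}



section AuxCycleDecomp
variable {V : Type*}

private lemma cycEdges_map_fst' (c : List V) : (cycEdges c).map Prod.fst = c := by
  rw [cycEdges, List.map_fst_zip]; simp

private lemma cycEdges_map_snd' (c : List V) : (cycEdges c).map Prod.snd = c.rotate 1 := by
  rw [cycEdges, List.map_snd_zip]; simp

private lemma cycEdges_nodup' {c : List V} (h : c.Nodup) : (cycEdges c).Nodup :=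
  (cycEdges_map_fst' c ▸ h).of_map _

private lemma mem_fst_of_mem_cycEdges' {c : List V} {u v : V} (h : (u, v) ∈ cycEdges c) :
    u ∈ c := by
  have := List.mem_map_of_mem (f := Prod.fst) h
  rwa [cycEdges_map_fst'] at this

private lemma mem_snd_of_mem_cycEdges' {c : List V} {u v : V} (h : (u, v) ∈ cycEdges c) :
    v ∈ c := by
  have := List.mem_map_of_mem (f := Prod.snd) h
  rw [cycEdges_map_snd'] at this
  exact (List.mem_rotate).mp this

private lemma exists_succ_of_mem' {c : List V} {v : V} (h : v ∈ c) :
    ∃ u, (v, u) ∈ cycEdges c := by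
  rw [← cycEdges_map_fst' c] at h
  obtain ⟨e, he, hfst⟩ := List.mem_map.mp h
  exact ⟨e.2, by rwa [← hfst, Prod.mk.eta]⟩

private lemma succ_unique' {c : List V} (hnd : c.Nodup) {v u₁ u₂ : V}
    (h1 : (v, u₁) ∈ cycEdges c) (h2 : (v, u₂) ∈ cycEdges c) : u₁ = u₂ := by
  have hm : ((cycEdges c).map Prod.fst).Nodup := by rw [cycEdges_map_fst']; exact hnd
  exact congrArg Prod.snd (List.inj_on_of_nodup_map hm h1 h2 rfl)

private lemma exists_pred_of_mem' {c : List V} {v : V} (h : v ∈ c) :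
    ∃ u, (u, v) ∈ cycEdges c := by
  have h' : v ∈ c.rotate 1 := List.mem_rotate.mpr h
  rw [← cycEdges_map_snd' c] at h'
  obtain ⟨e, he, hsnd⟩ := List.mem_map.mp h'
  exact ⟨e.1, by rwa [← hsnd, Prod.mk.eta]⟩

private lemma pred_unique' {c : List V} (hnd : c.Nodup) {v u₁ u₂ : V}
    (h1 : (u₁, v) ∈ cycEdges c) (h2 : (u₂, v) ∈ cycEdges c) : u₁ = u₂ := by
  have hm : ((cycEdges c).map Prod.snd).Nodup := by
    rw [cycEdges_map_snd']; exact List.nodup_rotate.mpr hnd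
  exact congrArg Prod.fst (List.inj_on_of_nodup_map hm h1 h2 rfl)

private lemma cycEdges_length' (c : List V) : (cycEdges c).length = c.length := by
  conv_rhs => rw [← cycEdges_map_fst' c]
  simp

private lemma card_succ' {α : Type*} [Finite α] {P Q : α → Prop} {a₀ : α} (h₀ : P a₀)
    (hQ : ∀ a, Q a ↔ P a ∧ a ≠ a₀) : Nat.card {a // Q a} + 1 = Nat.card {a // P a} := by
  have h1 : {a | P a} = insert a₀ {a | Q a} := by
    ext a
    simp only [Set.mem_setOf_eq, Set.mem_insert_iff, hQ]
    by_cases ha : a = a₀ <;> simp [ha, h₀]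
  have h2 : Nat.card {a // P a} = Set.ncard {a | P a} := (Nat.card_coe_set_eq _).symm ▸ rfl
  have h3 : Nat.card {a // Q a} = Set.ncard {a | Q a} := (Nat.card_coe_set_eq _).symm ▸ rfl
  rw [h2, h3, h1, Set.ncard_insert_of_notMem (by simp [hQ]) (Set.toFinite _)]

private lemma card_iff' {α : Type*} {P Q : α → Prop} (hQ : ∀ a, Q a ↔ P a) :
    Nat.card {a // Q a} = Nat.card {a // P a} :=
  Nat.card_congr (Equiv.subtypeEquivRight hQ)

private lemma card_union_list' {α : Type*} [Finite α] {P Q : α → Prop} {l : List α}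
    (hnd : l.Nodup) (hQ : ∀ a, P a ↔ Q a ∨ a ∈ l) (hdisj : ∀ a ∈ l, ¬ Q a) :
    Nat.card {a // P a} = Nat.card {a // Q a} + l.length := by
  classical
  have h1 : {a | P a} = {a | Q a} ∪ {a | a ∈ l} := by
    ext a; simp [hQ]
  have h2 : Nat.card {a // P a} = Set.ncard {a | P a} := (Nat.card_coe_set_eq _).symm ▸ rfl
  have h3 : Nat.card {a // Q a} = Set.ncard {a | Q a} := (Nat.card_coe_set_eq _).symm ▸ rfl
  rw [h2, h3, h1, Set.ncard_union_eq
    (by rw [Set.disjoint_left]; exact fun a ha hm => hdisj a hm ha)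
    (Set.toFinite _) (Set.toFinite _)]
  congr 1
  have : {a | a ∈ l} = (l.toFinset : Set α) := by ext a; simp
  rw [this, Set.ncard_coe_finset, List.toFinset_card_of_nodup hnd]

private lemma numEdges_pos_iff' [Finite V] (D : V → V → Prop) :
    1 ≤ numEdges D ↔ ∃ u v, D u v := by
  rw [numEdges]
  constructor
  · intro h
    have : Nat.card {e : V × V // D e.1 e.2} ≠ 0 := by omega
    rw [Ne, Nat.card_eq_zero, not_or] at this
    obtain ⟨⟨e, he⟩⟩ := not_isEmpty_iff.mp this.1
    exact ⟨e.1, e.2, he⟩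
  · rintro ⟨u, v, h⟩
    have : Nonempty {e : V × V // D e.1 e.2} := ⟨⟨(u, v), h⟩⟩
    exact Nat.one_le_iff_ne_zero.mpr (Nat.card_ne_zero.mpr ⟨this, inferInstance⟩)

private lemma numEdges_zero' [Finite V] {D : V → V → Prop} (h : numEdges D = 0) :
    ∀ u v, ¬ D u v := by
  intro u v hd
  have := (numEdges_pos_iff' D).mpr ⟨u, v, hd⟩
  omega

private lemma outDeg_cyc_sub' [Finite V] {D : V → V → Prop} {c : List V} (hnd : c.Nodup)
    (hc : ∀ e ∈ cycEdges c, D e.1 e.2) {v : V} (hmem : v ∈ c) :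
    outDeg (fun a b => D a b ∧ (a, b) ∉ cycEdges c) v + 1 = outDeg D v := by
  obtain ⟨u₀, hu₀⟩ := exists_succ_of_mem' hmem
  exact card_succ' (hc _ hu₀) (fun a =>
    ⟨fun ⟨hd, hnc⟩ => ⟨hd, fun h => hnc (h ▸ hu₀)⟩,
     fun ⟨hd, hne⟩ => ⟨hd, fun h => hne (succ_unique' hnd h hu₀)⟩⟩)

private lemma inDeg_cyc_sub' [Finite V] {D : V → V → Prop} {c : List V} (hnd : c.Nodup)
    (hc : ∀ e ∈ cycEdges c, D e.1 e.2) {v : V} (hmem : v ∈ c) :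
    inDeg (fun a b => D a b ∧ (a, b) ∉ cycEdges c) v + 1 = inDeg D v := by
  obtain ⟨u₀, hu₀⟩ := exists_pred_of_mem' hmem
  exact card_succ' (hc _ hu₀) (fun a =>
    ⟨fun ⟨hd, hnc⟩ => ⟨hd, fun h => hnc (h ▸ hu₀)⟩,
     fun ⟨hd, hne⟩ => ⟨hd, fun h => hne (pred_unique' hnd h hu₀)⟩⟩)

private lemma eul_cyc_sub' [Finite V] {D : V → V → Prop} {c : List V} (hnd : c.Nodup)
    (hc : ∀ e ∈ cycEdges c, D e.1 e.2) (heul : ∀ v, outDeg D v = inDeg D v) (v : V) :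
    outDeg (fun a b => D a b ∧ (a, b) ∉ cycEdges c) v
      = inDeg (fun a b => D a b ∧ (a, b) ∉ cycEdges c) v := by
  by_cases hv : v ∈ c
  · have h1 := outDeg_cyc_sub' hnd hc hv
    have h2 := inDeg_cyc_sub' hnd hc hv
    have h3 := heul v
    omega
  · show Nat.card {u // D v u ∧ (v, u) ∉ cycEdges c}
      = Nat.card {u // D u v ∧ (u, v) ∉ cycEdges c}
    calc Nat.card {u // D v u ∧ (v, u) ∉ cycEdges c}
        = Nat.card {u // D v u} := card_iff' (fun a =>
          ⟨fun h => h.1, fun h => ⟨h, fun hm => hv (mem_fst_of_mem_cycEdges' hm)⟩⟩)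
      _ = Nat.card {u // D u v} := heul v
      _ = Nat.card {u // D u v ∧ (u, v) ∉ cycEdges c} := (card_iff' (fun a =>
          ⟨fun h => h.1, fun h => ⟨h, fun hm => hv (mem_snd_of_mem_cycEdges' hm)⟩⟩)).symm

private lemma numEdges_cyc_sub' [Finite V] {D : V → V → Prop} {c : List V} (hnd : c.Nodup)
    (hc : ∀ e ∈ cycEdges c, D e.1 e.2) :
    numEdges D = numEdges (fun a b => D a b ∧ (a, b) ∉ cycEdges c) + c.length := by
  rw [numEdges, numEdges, ← cycEdges_length' c]
  exact card_union_list' (cycEdges_nodup' hnd)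
    (fun e => by
      constructor
      · intro hd
        by_cases hm : e ∈ cycEdges c
        · exact Or.inr hm
        · exact Or.inl ⟨hd, by rwa [Prod.mk.eta]⟩
      · rintro (⟨hd, _⟩ | hm)
        · exact hd
        · exact hc _ hm)
    (fun e hm hq => hq.2 (by rwa [Prod.mk.eta]))

private lemma decomp_nil' [Finite V] {D : V → V → Prop} (h : numEdges D = 0) :
    IsCycleDecomp D [] := by
  refine ⟨by simp, by simp, fun u v => ?_⟩
  simp only [List.map_nil, List.flatten_nil, List.not_mem_nil, iff_false]
  exact numEdges_zero' h u v

private lemma aux_decomp {V : Type*} [Fintype V] (n : ℕ)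
    (hC1 : (1:ℝ) < 24 * (n:ℝ) ^ ((4:ℝ)/3))
    (hcyc : ∀ D' : V → V → Prop, (∀ u v, D' u v → ¬ D' v u) →
      (∀ v, outDeg D' v = inDeg D' v) → 1 ≤ numEdges D' →
      ∃ c : List V, IsCycle D' c ∧
        (numEdges D' : ℝ) / (24 * (n : ℝ) ^ ((4 : ℝ) / 3)) < (c.length : ℝ)) :
    ∀ m : ℕ, ∀ D : V → V → Prop, numEdges D ≤ m → (∀ u v, D u v → ¬ D v u) →
      (∀ v, outDeg D v = inDeg D v) →
      ∃ Cs : List (List V), IsCycleDecomp D Cs ∧ (Cs = [] ∨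
        (1:ℝ) ≤ (1 - 1/(24 * (n:ℝ) ^ ((4:ℝ)/3))) ^ (Cs.length - 1) * numEdges D) := by
  set C : ℝ := 24 * (n:ℝ) ^ ((4:ℝ)/3) with hCdef
  have hC0 : (0:ℝ) < C := lt_trans one_pos hC1
  have hq0 : (0:ℝ) < 1 - 1/C := by
    have : 1/C < 1 := by rw [div_lt_one hC0]; exact hC1
    linarith
  intro m
  induction m with
  | zero =>
    intro D hm _ _
    exact ⟨[], decomp_nil' (by omega), Or.inl rfl⟩
  | succ m ih =>
    intro D hm horient heul
    by_cases h0 : numEdges D = 0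
    · exact ⟨[], decomp_nil' h0, Or.inl rfl⟩
    have h1 : 1 ≤ numEdges D := by omega
    obtain ⟨c, ⟨hc2, hcnd, hce⟩, hlen⟩ := hcyc D horient heul h1
    have hnum := numEdges_cyc_sub' (D := D) (c := c) hcnd hce
    have hm' : numEdges (fun a b => D a b ∧ (a, b) ∉ cycEdges c) ≤ m := by omega
    have horient' : ∀ u v, (D u v ∧ (u, v) ∉ cycEdges c) → ¬ (D v u ∧ (v, u) ∉ cycEdges c) :=
      fun u v h h' => horient u v h.1 h'.1
    obtain ⟨Cs', hdec', hineq'⟩ := ih _ hm' horient' (eul_cyc_sub' hcnd hce heul)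
    obtain ⟨hcys', hnd', hmem'⟩ := hdec'
    refine ⟨c :: Cs', ⟨?_, ?_, ?_⟩, Or.inr ?_⟩
    · rintro c' hc'
      rcases List.mem_cons.mp hc' with rfl | hc'
      · exact ⟨hc2, hcnd, hce⟩
      · obtain ⟨h2, hnd, he⟩ := hcys' c' hc'
        exact ⟨h2, hnd, fun e hme => (he e hme).1⟩
    · show (cycEdges c ++ (Cs'.map cycEdges).flatten).Nodup
      rw [List.nodup_append]
      refine ⟨cycEdges_nodup' hcnd, hnd', ?_⟩
      intro e he e' he' heq
      subst heq
      have := (hmem' e.1 e.2).mpr he'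
      exact this.2 he
    · intro u v
      simp only [List.map_cons, List.flatten_cons, List.mem_append]
      constructor
      · intro hd
        by_cases hmm : (u, v) ∈ cycEdges c
        · exact Or.inl hmm
        · exact Or.inr ((hmem' u v).mp ⟨hd, hmm⟩)
      · rintro (hmm | hmm)
        · exact hce _ hmm
        · exact ((hmem' u v).mpr hmm).1
    · have hexp : (c :: Cs').length - 1 = Cs'.length := by simp
      rw [hexp]
      have hm1 : (1:ℝ) ≤ (numEdges D : ℝ) := by exact_mod_cast h1
      rcases hineq' with rfl | hineq'
      · simpa using hm1
      by_cases hk : Cs'.length = 0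
      · rw [hk]; simpa using hm1
      have hk1 : 1 ≤ Cs'.length := by omega
      have hmm' : (numEdges (fun a b => D a b ∧ (a, b) ∉ cycEdges c) : ℝ)
          < (1 - 1/C) * numEdges D := by
        have h2 : (numEdges (fun a b => D a b ∧ (a, b) ∉ cycEdges c) : ℝ)
            = (numEdges D : ℝ) - c.length := by
          rw [hnum]; push_cast; ring
        have h3 : (numEdges D : ℝ) / C < c.length := hlen
        have h4 : (1 - 1/C) * numEdges D = numEdges D - numEdges D / C := by ring
        linarith
      calc (1:ℝ) ≤ (1 - 1/C) ^ (Cs'.length - 1)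
            * (numEdges (fun a b => D a b ∧ (a, b) ∉ cycEdges c)) := hineq'
        _ ≤ (1 - 1/C) ^ (Cs'.length - 1) * ((1 - 1/C) * numEdges D) := by
            exact mul_le_mul_of_nonneg_left hmm'.le (pow_nonneg hq0.le _)
        _ = (1 - 1/C) ^ Cs'.length * numEdges D := by
            rw [← mul_assoc, ← pow_succ, Nat.sub_add_cancel hk1]

private lemma final_bound (n k m : ℕ) (hn : 2 ≤ n) (hm : m ≤ n * n) (hk : 1 ≤ k)
    (h : (1:ℝ) ≤ (1 - 1/(24 * (n:ℝ) ^ ((4:ℝ)/3))) ^ (k - 1) * m) :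
    (k : ℝ) ≤ 50 * (n : ℝ) ^ ((4 : ℝ) / 3) * Real.log n := by
  set X : ℝ := (n:ℝ) ^ ((4:ℝ)/3) with hX
  have hn2 : (2:ℝ) ≤ (n:ℝ) := by exact_mod_cast hn
  have hXn : (n:ℝ) ≤ X := by
    calc (n:ℝ) = (n:ℝ) ^ (1:ℝ) := (Real.rpow_one _).symm
    _ ≤ X := Real.rpow_le_rpow_of_exponent_le (by linarith) (by norm_num)
  have hX2 : (2:ℝ) ≤ X := le_trans hn2 hXn
  set C : ℝ := 24 * X with hC
  have hC1 : (1:ℝ) < C := by linarith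
  have hC0 : (0:ℝ) < C := by linarith
  set q : ℝ := 1 - 1/C with hq
  have hq0 : 0 < q := by
    have : 1/C < 1 := by rw [div_lt_one hC0]; exact hC1
    simp only [hq]; linarith
  have hmn : (m:ℝ) ≤ (n:ℝ) * n := by exact_mod_cast hm
  have h2 : (1:ℝ) ≤ q ^ (k-1) * ((n:ℝ) * n) :=
    le_trans h (mul_le_mul_of_nonneg_left hmn (pow_nonneg hq0.le _))
  have hlogq : Real.log q ≤ -(1/C) := by
    have := Real.log_le_sub_one_of_pos hq0
    simp only [hq] at this ⊢; linarith
  have hn0 : (0:ℝ) < (n:ℝ) := by linarith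
  have hlog2 : (0.6931471803 : ℝ) < Real.log n := by
    calc (0.6931471803:ℝ) < Real.log 2 := Real.log_two_gt_d9
    _ ≤ Real.log n := Real.log_le_log (by norm_num) hn2
  have h3 : (0:ℝ) ≤ ((k-1 : ℕ):ℝ) * Real.log q + 2 * Real.log n := by
    have h4 := Real.log_nonneg h2
    rw [Real.log_mul (pow_ne_zero _ hq0.ne') (by positivity),
      Real.log_pow, Real.log_mul hn0.ne' hn0.ne'] at h4
    linarith
  have h5 : ((k-1:ℕ):ℝ) * (1/C) ≤ 2 * Real.log n := by
    have hk0 : (0:ℝ) ≤ ((k-1:ℕ):ℝ) := Nat.cast_nonneg _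
    nlinarith [mul_le_mul_of_nonneg_left hlogq hk0]
  have h6 : ((k-1:ℕ):ℝ) ≤ 2 * C * Real.log n := by
    have := mul_le_mul_of_nonneg_left h5 hC0.le
    have hcc : C * (((k-1:ℕ):ℝ) * (1 / C)) = ((k-1:ℕ):ℝ) := by
      field_simp
    rw [hcc] at this
    nlinarith
  have hkc : ((k-1:ℕ):ℝ) = (k:ℝ) - 1 := by
    push_cast [Nat.cast_sub hk]; ring
  have hfin : (1:ℝ) ≤ 2 * X * Real.log n := by nlinarith
  rw [hkc] at h6
  simp only [hC] at h6
  nlinarith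

end AuxCycleDecomp

/-- Suppose every Eulerian oriented graph on the same `n`-vertex set with at
least one edge contains a cycle of length more than `r/(24 n^{4/3})`, where `r` is its number
of edges. Then iteratively removing longest cycles terminates within `50 n^{4/3} log n` steps;
consequently, every Eulerian oriented graph on `n` vertices can be decomposed into at most
`50 n^{4/3} log n` cycles. -/
theorem eulerian_cycle_decomposition {V : Type*} [Fintype V] (n : ℕ)
    (hcard : Fintype.card V = n) (D : V → V → Prop)
    (horient : ∀ u v, D u v → ¬ D v u)
    (heul : ∀ v, outDeg D v = inDeg D v)
    (hcyc : ∀ D' : V → V → Prop, (∀ u v, D' u v → ¬ D' v u) →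
      (∀ v, outDeg D' v = inDeg D' v) → 1 ≤ numEdges D' →
      ∃ c : List V, IsCycle D' c ∧
        (numEdges D' : ℝ) / (24 * (n : ℝ) ^ ((4 : ℝ) / 3)) < (c.length : ℝ)) :
    ∃ Cs : List (List V), IsCycleDecomp D Cs ∧
      (Cs.length : ℝ) ≤ 50 * (n : ℝ) ^ ((4 : ℝ) / 3) * Real.log n := by
  by_cases h0 : numEdges D = 0
  · refine ⟨[], decomp_nil' h0, ?_⟩
    simp only [List.length_nil, Nat.cast_zero]
    rcases Nat.eq_zero_or_pos n with rfl | hn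
    · simp [Real.zero_rpow (by norm_num : ((4:ℝ)/3) ≠ 0)]
    · have h1 : (0:ℝ) ≤ (n:ℝ) ^ ((4:ℝ)/3) := Real.rpow_nonneg (Nat.cast_nonneg _) _
      have h2 : (0:ℝ) ≤ Real.log n := Real.log_nonneg (by exact_mod_cast hn)
      positivity
  -- there is an edge, so n ≥ 2
  have h1 : 1 ≤ numEdges D := by omega
  obtain ⟨u, v, huv⟩ := (numEdges_pos_iff' D).mp h1
  have hne : u ≠ v := by
    rintro rfl
    exact horient u u huv huv
  have hn2 : 2 ≤ n := by
    rw [← hcard]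
    exact Fintype.one_lt_card_iff.mpr ⟨u, v, hne⟩
  have hC1 : (1:ℝ) < 24 * (n:ℝ) ^ ((4:ℝ)/3) := by
    have : (1:ℝ) ≤ (n:ℝ) ^ ((4:ℝ)/3) :=
      Real.one_le_rpow (by exact_mod_cast le_trans (by norm_num) hn2) (by norm_num)
    linarith
  obtain ⟨Cs, hdec, hineq⟩ := aux_decomp n hC1 hcyc (numEdges D) D le_rfl horient heul
  refine ⟨Cs, hdec, ?_⟩
  rcases hineq with rfl | hineq
  · simp only [List.length_nil, Nat.cast_zero]
    have hx : (0:ℝ) ≤ (n:ℝ) ^ ((4:ℝ)/3) := Real.rpow_nonneg (Nat.cast_nonneg _) _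
    have hl : (0:ℝ) ≤ Real.log n :=
      Real.log_nonneg (by exact_mod_cast le_trans (by norm_num) hn2)
    positivity
  have hk1 : 1 ≤ Cs.length := by
    rcases Cs with _ | ⟨c, Cs⟩
    · exfalso
      have := hdec.2.2 u v
      simp only [List.map_nil, List.flatten_nil, List.not_mem_nil, iff_false] at this
      exact this huv
    · simp
  have hmn : numEdges D ≤ n * n := by
    have h2 : numEdges D ≤ Nat.card (V × V) := Finite.card_subtype_le _
    rwa [Nat.card_prod, Nat.card_eq_fintype_card, hcard] at h2
  exact final_bound n Cs.length (numEdges D) hn2 hmn hk1 hineq
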